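/- Let q be prime and let φ: ℤ_q^m → ℤ_q be a GPqA(q^m) of type 1 = (1,…,1). Then the expansion φ': ℤ_{q²}^m → ℤ_q of φ of type 1 is a 2m-generalized plateaued function: for every v ∈ ℤ_{q²}^m, |Σ_{x ∈ ℤ_{q²}^m} ζ_q^{φ'(x)} ζ_{q²}^{−v·x}|² ∈ {0, q^{3m}}, with the value q^{3m} attained exactly when v ≡ (1,…,1) mod q. -/

import Mathlib

open scoped BigOperators

noncomputable section

/-- `zeta k` is the complex `k`-th root of unity `exp(2π√-1/k)`. -/
def zeta (k : ℕ) : ℂ := Complex.exp (2 * Real.pi * Complex.I / k)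

/-- Periodic autocorrelation of a map `f : A → ℤ_q` at shift `w`. -/
def AC {A : Type*} [AddCommGroup A] [Fintype A] (q : ℕ) (f : A → ZMod q) (w : A) : ℂ :=
  ∑ g : A, zeta q ^ (f g - f (g + w)).val

/-- The expansion `φ' : ℤ_{q²}^m → ℤ_q` of type `1 = (1,…,1)` of `φ : ℤ_q^m → ℤ_q`:
`φ'(g) = φ(g mod q) + Σ_i ⌊g_i/q⌋ (mod q)`. -/
def expandOne (q m : ℕ) (φ : (Fin m → ZMod q) → ZMod q)
    (g : Fin m → ZMod (q ^ 2)) : ZMod q :=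
  φ (fun i => ((g i).val : ZMod q)) + ((∑ i, (g i).val / q : ℕ) : ZMod q)

/-- `L = {(y_1 q, …, y_m q) : 0 ≤ y_i < q} ⊆ ℤ_{q²}^m`. -/
def LOne (q m : ℕ) : Set (Fin m → ZMod (q ^ 2)) :=
  {g | ∀ i, q ∣ (g i).val}

/-- The "Walsh" sum `Σ_{x ∈ ℤ_{q²}^m} ζ_q^{φ'(x)} ζ_{q²}^{-v·x}`. -/
def WS (q m : ℕ) [NeZero (q ^ 2)] (f : (Fin m → ZMod (q ^ 2)) → ZMod q)
    (v : Fin m → ZMod (q ^ 2)) : ℂ :=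
  ∑ x : Fin m → ZMod (q ^ 2),
    zeta q ^ (f x).val * zeta (q ^ 2) ^ (-(∑ i, (v i).val * (x i).val : ℤ))

-- ===== character lemmas =====
lemma zeta_ne_zero (k : ℕ) : zeta k ≠ 0 := Complex.exp_ne_zero _

lemma zeta_prim (k : ℕ) (hk : k ≠ 0) : IsPrimitiveRoot (zeta k) k :=
  Complex.isPrimitiveRoot_exp k hk

lemma zeta_pow_self (k : ℕ) (hk : k ≠ 0) : zeta k ^ k = 1 := (zeta_prim k hk).pow_eq_one

lemma abs_zeta (k : ℕ) : ‖zeta k‖ = 1 := by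
  rw [zeta, show 2*(Real.pi:ℂ)*Complex.I/k = ((2*Real.pi/k : ℝ):ℂ) * Complex.I by push_cast; ring]
  exact Complex.norm_exp_ofReal_mul_I _

lemma conj_zeta (k : ℕ) : (starRingEnd ℂ) (zeta k) = (zeta k)⁻¹ :=
  (Complex.inv_eq_conj (by simpa using abs_zeta k)).symm

lemma zeta_sq_pow (q : ℕ) (hq : q ≠ 0) : zeta (q^2) ^ q = zeta q := by
  rw [zeta, zeta, ← Complex.exp_nat_mul]
  congr 1
  have hq' : (q:ℂ) ≠ 0 := Nat.cast_ne_zero.mpr hq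
  field_simp
  push_cast
  ring

lemma zpow_congr {N : ℕ} {ζ : ℂ} (hζ0 : ζ ≠ 0) (hζ : ζ ^ N = 1)
    {a b : ℤ} (h : (a : ZMod N) = (b : ZMod N)) : ζ ^ a = ζ ^ b := by
  obtain ⟨k, hk⟩ : (N:ℤ) ∣ a - b := by
    rw [← ZMod.intCast_zmod_eq_zero_iff_dvd]
    push_cast
    rw [sub_eq_zero]; exact h
  have ha : a = b + N * k := by omega
  rw [ha, zpow_add₀ hζ0, zpow_mul, zpow_natCast, hζ, one_zpow, mul_one]

/-- The canonical additive character `ZMod N → ℂ`. -/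
def chi (N : ℕ) (a : ZMod N) : ℂ := zeta N ^ (a.val : ℤ)

lemma chi_intCast (N : ℕ) [NeZero N] (n : ℤ) : chi N (n : ZMod N) = zeta N ^ n := by
  apply zpow_congr (zeta_ne_zero N) (zeta_pow_self N (NeZero.ne N))
  push_cast [ZMod.natCast_val, ZMod.intCast_cast, ZMod.intCast_zmod_cast]
  simp

lemma chi_pow (N : ℕ) (a : ZMod N) : chi N a = zeta N ^ a.val := by
  rw [chi, zpow_natCast]

lemma chi_add (N : ℕ) [NeZero N] (a b : ZMod N) : chi N (a + b) = chi N a * chi N b := by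
  have h : ((((a.val : ℤ) + (b.val : ℤ) : ℤ)) : ZMod N) = a + b := by
    push_cast [ZMod.natCast_val]; simp [ZMod.cast_id]
  rw [← h, chi_intCast, zpow_add₀ (zeta_ne_zero N)]
  rfl

lemma conj_chi (N : ℕ) [NeZero N] (a : ZMod N) :
    (starRingEnd ℂ) (chi N a) = chi N (-a) := by
  have h : (starRingEnd ℂ) (chi N a) = zeta N ^ (-(a.val : ℤ)) := by
    rw [chi, map_zpow₀, conj_zeta, inv_zpow, ← zpow_neg]
  rw [h, ← chi_intCast]
  congr 1
  push_cast [ZMod.natCast_val]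
  simp [ZMod.cast_id]

lemma chi_zero (N : ℕ) : chi N 0 = 1 := by simp [chi, ZMod.val_zero]

lemma chi_sub (N : ℕ) [NeZero N] (a b : ZMod N) : chi N (a - b) = chi N a * chi N (-b) := by
  rw [sub_eq_add_neg, chi_add]

lemma chi_ne_one (N : ℕ) [NeZero N] {a : ZMod N} (ha : a ≠ 0) : chi N a ≠ 1 := by
  rw [chi_pow]
  intro h1
  have := ((zeta_prim N (NeZero.ne N)).pow_eq_one_iff_dvd a.val).mp h1
  have hlt : a.val < N := ZMod.val_lt a
  have hpos : 0 < a.val := by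
    rcases Nat.eq_zero_or_pos a.val with h | h
    · exact absurd ((ZMod.val_eq_zero a).mp h) ha
    · exact h
  have := Nat.le_of_dvd hpos this
  omega

-- ===== nat/shift lemmas =====
lemma nat_shift' {q a1 a0 c : ℕ} (hq : 0 < q) (ha1 : a1 < q) (ha0 : a0 < q) (hc : c < q) :
    ((q*a1+a0) + q*c) % q^2 % q = (q*a1+a0) % q ∧
    ((q*a1+a0) + q*c) % q^2 / q % q = ((q*a1+a0)/q + c) % q := by
  have hkey : (q*a1+a0) + q*c = q*(a1+c) + a0 := by ring
  have hdiv : (q*a1+a0)/q = a1 := by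
    rw [Nat.mul_add_div hq, Nat.div_eq_of_lt ha0, add_zero]
  rw [hkey, hdiv]
  by_cases hcase : a1 + c < q
  · have hlt : q*(a1+c) + a0 < q^2 := by nlinarith
    rw [Nat.mod_eq_of_lt hlt, Nat.mul_add_mod, Nat.mul_add_div hq,
      Nat.div_eq_of_lt ha0, add_zero, Nat.mul_add_mod]
    exact ⟨rfl, rfl⟩
  · push_neg at hcase
    set d := a1 + c - q with hd
    have hdlt : d < q := by omega
    have hsplit : q*(a1+c) + a0 = q^2 + (q*d + a0) := by
      have : a1 + c = q + d := by omega
      rw [this]; ring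
    have hlt2 : q*d + a0 < q^2 := by nlinarith
    rw [hsplit, Nat.add_mod_left, Nat.mod_eq_of_lt hlt2, Nat.mul_add_mod,
      Nat.mul_add_div hq, Nat.div_eq_of_lt ha0, add_zero, Nat.mul_add_mod]
    constructor
    · rfl
    · have h1 : d % q = d := Nat.mod_eq_of_lt hdlt
      have h2 : (a1 + c) % q = d := by
        have : a1 + c = q + d := by omega
        rw [this, Nat.add_mod_left, h1]
      rw [h1, h2]

lemma nat_shift {q a c : ℕ} (hq : 0 < q) (ha : a < q^2) (hc : c < q) :
    (a + q*c) % q^2 % q = a % q ∧ (a + q*c) % q^2 / q % q = (a/q + c) % q := by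
  have h1 : q * (a/q) + a % q = a := Nat.div_add_mod a q
  have ha1 : a / q < q := by
    apply Nat.div_lt_iff_lt_mul hq |>.mpr
    rw [← pow_two]; exact ha
  have ha0 : a % q < q := Nat.mod_lt _ hq
  have := nat_shift' hq ha1 ha0 hc
  rw [h1] at this
  exact this

lemma shift_val {q : ℕ} (hq : 1 < q) [NeZero (q^2)] (g : ZMod (q^2)) (c : ℕ) (hc : c < q) :
    ((((g + ((q*c : ℕ) : ZMod (q^2))).val : ℕ)) % q = g.val % q) ∧
    ((g + ((q*c : ℕ) : ZMod (q^2))).val / q % q = (g.val / q + c) % q) := by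
  have hq0 : 0 < q := by omega
  have hlt : q * c < q^2 := by nlinarith
  have hval : (g + ((q*c : ℕ) : ZMod (q^2))).val = (g.val + q*c) % q^2 := by
    rw [ZMod.val_add, ZMod.val_cast_of_lt hlt]
  rw [hval]
  exact nat_shift hq0 (ZMod.val_lt g) hc

lemma expand_shift (q m : ℕ) (hq : 1 < q) [NeZero q] [NeZero (q^2)]
    (φ : (Fin m → ZMod q) → ZMod q) (g : Fin m → ZMod (q^2)) (y : Fin m → ZMod q) :
    expandOne q m φ (g + fun i => ((q * (y i).val : ℕ) : ZMod (q^2))) =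
      expandOne q m φ g + ∑ i, y i := by
  have hvl : ∀ i : Fin m, (y i).val < q := fun i => ZMod.val_lt (y i)
  unfold expandOne
  have harg : (fun i => (((g + fun i => ((q * (y i).val : ℕ) : ZMod (q^2))) i).val : ZMod q))
      = fun i => ((g i).val : ZMod q) := by
    funext i
    have := (shift_val hq (g i) ((y i).val) (hvl i)).1
    simp only [Pi.add_apply]
    rw [← ZMod.natCast_mod ((g i + ((q * (y i).val : ℕ) : ZMod (q^2))).val) q, this,
      ZMod.natCast_mod]
  rw [harg]
  have hsum : ((∑ i, ((g + fun i => ((q * (y i).val : ℕ) : ZMod (q^2))) i).val / q : ℕ) : ZMod q)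
      = ((∑ i, (g i).val / q : ℕ) : ZMod q) + ∑ i, y i := by
    rw [Nat.cast_sum, Nat.cast_sum, ← Finset.sum_add_distrib]
    apply Finset.sum_congr rfl
    intro i _
    have h2 := (shift_val hq (g i) ((y i).val) (hvl i)).2
    simp only [Pi.add_apply]
    calc (((g i + ((q * (y i).val : ℕ) : ZMod (q^2))).val / q : ℕ) : ZMod q)
        = (((g i + ((q * (y i).val : ℕ) : ZMod (q^2))).val / q % q : ℕ) : ZMod q) := by
          rw [ZMod.natCast_mod]
      _ = (((g i).val / q + (y i).val) % q : ℕ) := by rw [h2]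
      _ = (((g i).val / q : ℕ) : ZMod q) + ((y i).val : ZMod q) := by
          rw [ZMod.natCast_mod]; push_cast; ring
      _ = ((g i).val / q : ℕ) + y i := by rw [ZMod.natCast_val, ZMod.cast_id]
  rw [hsum]
  ring


/-- for `q` prime, if `φ : ℤ_q^m → ℤ_q` is a `GPqA(q^m)` of type `1`,
then the expansion `φ' : ℤ_{q²}^m → ℤ_q` is a `2m`-generalized plateaued function:
`|Σ_x ζ_q^{φ'(x)} ζ_{q²}^{-v·x}|² ∈ {0, q^{3m}}`, with the value `q^{3m}` attained
exactly when `v ≡ (1,…,1) (mod q)`. -/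
theorem expansion_is_generalized_plateaued
    (q m : ℕ) [NeZero q] [NeZero (q ^ 2)] (hq : Nat.Prime q)
    (φ : (Fin m → ZMod q) → ZMod q)
    (hGP : ∀ g : Fin m → ZMod (q ^ 2), g ∉ LOne q m → AC q (expandOne q m φ) g = 0) :
    ∀ v : Fin m → ZMod (q ^ 2),
      ((∀ i, (((v i).val : ℕ) : ZMod q) = 1) →
        ‖WS q m (expandOne q m φ) v‖ ^ 2 = (q : ℝ) ^ (3 * m))
      ∧ ((¬ ∀ i, (((v i).val : ℕ) : ZMod q) = 1) →
        ‖WS q m (expandOne q m φ) v‖ ^ 2 = 0) := by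
  classical
  intro v
  have hq1 : 1 < q := hq.one_lt
  have hqne : q ≠ 0 := hq.ne_zero
  set f := expandOne q m φ with hf
  set vb : Fin m → ZMod q := fun i => (((v i).val : ℕ) : ZMod q) with hvb
  set c : Fin m → ZMod q := fun i => 1 - vb i with hc
  set ψ : (Fin m → ZMod q) → (Fin m → ZMod (q^2)) :=
    fun y => fun i => ((q * (y i).val : ℕ) : ZMod (q^2)) with hψ
  -- WS in character form
  have hWS : WS q m f v = ∑ x : Fin m → ZMod (q^2),
      chi q (f x) * chi (q^2) (-(∑ i, v i * x i)) := by
    apply Finset.sum_congr rfl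
    intro x _
    have h1 : chi q (f x) = zeta q ^ (f x).val := chi_pow q (f x)
    have h2 : chi (q^2) (-(∑ i, v i * x i))
        = zeta (q^2) ^ (-(∑ i, ((v i).val : ℤ) * ((x i).val : ℤ))) := by
      rw [show (-(∑ i, v i * x i) : ZMod (q^2))
          = ((-(∑ i, ((v i).val : ℤ) * ((x i).val : ℤ)) : ℤ) : ZMod (q^2)) by
        push_cast [ZMod.natCast_val, ZMod.cast_id]; ring, chi_intCast]
    rw [h1, h2]
  -- conj WS
  have hconj : (starRingEnd ℂ) (WS q m f v) = ∑ x : Fin m → ZMod (q^2),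
      chi q (-(f x)) * chi (q^2) (∑ i, v i * x i) := by
    rw [hWS, map_sum]
    apply Finset.sum_congr rfl
    intro x _
    rw [map_mul, conj_chi, conj_chi, neg_neg]
  -- autocorrelation-type sum
  set CA : (Fin m → ZMod (q^2)) → ℂ := fun w => ∑ g, chi q (f (g + w) - f g) with hCA
  have hCA0 : ∀ w : Fin m → ZMod (q^2), w ∉ LOne q m → CA w = 0 := by
    intro w hw
    have hAC : AC q f w = ∑ g : Fin m → ZMod (q^2), chi q (f g - f (g + w)) := by
      apply Finset.sum_congr rfl
      intro g _
      rw [chi_pow]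
    have : CA w = (starRingEnd ℂ) (AC q f w) := by
      rw [hAC, map_sum, hCA]
      apply Finset.sum_congr rfl
      intro g _
      rw [conj_chi, neg_sub]
    rw [this, hGP w hw, map_zero]
  have hCAψ : ∀ y : Fin m → ZMod q, CA (ψ y) = ((q:ℂ)^2)^m * chi q (∑ i, y i) := by
    intro y
    rw [hCA]
    have hterm : ∀ g : Fin m → ZMod (q^2), f (g + ψ y) - f g = ∑ i, y i := by
      intro g
      have := expand_shift q m hq1 φ g y
      rw [hf]
      simp only [hψ]
      rw [this]
      ring
    simp only [hterm]
    rw [Finset.sum_const, Finset.card_univ, Fintype.card_fun, ZMod.card, Fintype.card_fin,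
      nsmul_eq_mul]
    push_cast
    ring
  have hchiψ : ∀ y : Fin m → ZMod q,
      chi (q^2) (-(∑ i, v i * ψ y i)) = chi q (-(∑ i, vb i * y i)) := by
    intro y
    set t : ℤ := -(∑ i, ((v i).val : ℤ) * ((y i).val : ℤ)) with ht
    have h1 : (-(∑ i, v i * ψ y i) : ZMod (q^2)) = ((q * t : ℤ) : ZMod (q^2)) := by
      simp only [hψ, ht]
      push_cast [ZMod.natCast_val, ZMod.cast_id, ZMod.intCast_cast]
      rw [mul_neg, neg_inj, Finset.mul_sum]
      exact Finset.sum_congr rfl fun i _ => by ring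
    have h2 : ((t : ZMod q)) = -(∑ i, vb i * y i) := by
      simp only [hvb, ht]
      push_cast [ZMod.natCast_val, ZMod.cast_id, ZMod.intCast_cast]
      ring
    rw [h1, chi_intCast, zpow_mul, zpow_natCast, zeta_sq_pow q hqne, ← h2, chi_intCast]
  -- the master computation

  have key : WS q m f v * (starRingEnd ℂ) (WS q m f v)
      = ((q:ℂ)^2)^m *
        ∑ y : Fin m → ZMod q, chi q (∑ i, c i * y i) := by
    rw [hconj, hWS, Finset.sum_mul_sum, Finset.sum_comm]
    have step1 : ∀ y : Fin m → ZMod (q^2),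
        (∑ x : Fin m → ZMod (q^2), (chi q (f x) * chi (q^2) (-(∑ i, v i * x i))) *
          (chi q (-(f y)) * chi (q^2) (∑ i, v i * y i)))
        = ∑ w : Fin m → ZMod (q^2),
            chi (q^2) (-(∑ i, v i * w i)) * chi q (f (y + w) - f y) := by
      intro y
      refine (Fintype.sum_equiv (Equiv.addLeft y) _ _ (fun w => ?_)).symm
      show chi (q^2) (-(∑ i, v i * w i)) * chi q (f (y + w) - f y)
        = (chi q (f (y + w)) * chi (q^2) (-(∑ i, v i * (y + w) i))) *
          (chi q (-(f y)) * chi (q^2) (∑ i, v i * y i))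
      have hsplit : (∑ i, v i * (y + w) i) = (∑ i, v i * y i) + ∑ i, v i * w i := by
        simp [mul_add, Finset.sum_add_distrib]
      have hA : chi (q^2) (-(∑ i, v i * y i)) * chi (q^2) (∑ i, v i * y i) = 1 := by
        rw [← chi_add]; simp [chi_zero]
      rw [chi_sub, hsplit, show (-((∑ i, v i * y i) + ∑ i, v i * w i))
          = (-(∑ i, v i * w i)) + (-(∑ i, v i * y i)) by ring, chi_add]
      linear_combination
        (-(chi q (f (y + w)) * chi q (-(f y)) * chi (q^2) (-(∑ i, v i * w i)))) * hA
    simp only [step1]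
    rw [Finset.sum_comm]
    have step2 : ∀ w : Fin m → ZMod (q^2),
        (∑ y : Fin m → ZMod (q^2),
          chi (q^2) (-(∑ i, v i * w i)) * chi q (f (y + w) - f y))
        = chi (q^2) (-(∑ i, v i * w i)) * CA w := by
      intro w
      rw [hCA, Finset.mul_sum]
    simp only [step2]
    -- restrict to LOne
    rw [← Finset.sum_filter_of_ne (p := fun w => w ∈ LOne q m)
      (by intro w _ hne; by_contra hw; rw [hCA0 w hw, mul_zero] at hne; exact hne rfl)]
    -- reindex by ψ
    have hψval : ∀ (y : Fin m → ZMod q) (i : Fin m), (ψ y i).val = q * (y i).val := by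
      intro y i
      simp only [hψ]
      exact ZMod.val_cast_of_lt (by nlinarith [ZMod.val_lt (y i)])
    have hinv : ∀ w ∈ Finset.univ.filter (fun w => w ∈ LOne q m),
        ψ (fun j => (((w j).val / q : ℕ) : ZMod q)) = w := by
      intro w hw
      simp only [Finset.mem_filter, Finset.mem_univ, true_and] at hw
      funext i
      simp only [hψ]
      have hdivlt : (w i).val / q < q := by
        apply Nat.div_lt_iff_lt_mul (by omega) |>.mpr
        have := ZMod.val_lt (w i)
        nlinarith
      rw [ZMod.val_cast_of_lt hdivlt, Nat.mul_div_cancel' (hw i)]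
      simp [ZMod.natCast_val, ZMod.cast_id]
    have hbij : ∑ w ∈ Finset.univ.filter (fun w => w ∈ LOne q m),
        chi (q^2) (-(∑ i, v i * w i)) * CA w
        = ∑ y : Fin m → ZMod q, chi (q^2) (-(∑ i, v i * ψ y i)) * CA (ψ y) := by
      apply Finset.sum_nbij' (i := fun w => fun j => (((w j).val / q : ℕ) : ZMod q)) (j := ψ)
      · intro a _; exact Finset.mem_univ _
      · intro y _
        simp only [Finset.mem_filter, Finset.mem_univ, true_and]
        intro i
        rw [hψval y i]
        exact Dvd.intro _ rfl
      · intro w hw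
        exact hinv w hw
      · intro y _
        funext i
        have : (ψ y i).val / q = (y i).val := by
          rw [hψval y i, Nat.mul_div_cancel_left _ (show 0 < q by omega)]
        rw [this]
        simp [ZMod.natCast_val, ZMod.cast_id]
      · intro w hw
        rw [hinv w hw]
    rw [hbij]
    rw [Finset.mul_sum]
    apply Finset.sum_congr rfl
    intro y _
    rw [hchiψ y, hCAψ y]
    have hsum : (∑ i, c i * y i) = (-(∑ i, vb i * y i)) + ∑ i, y i := by
      simp only [hc, sub_mul, one_mul]
      rw [Finset.sum_sub_distrib]
      ring
    rw [hsum, chi_add]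
    ring
  -- final evaluation
  set T : ℂ := ∑ y : Fin m → ZMod q, chi q (∑ i, c i * y i) with hT
  have habs : ((‖WS q m f v‖^2 : ℝ) : ℂ) = ((q:ℂ)^2)^m * T := by
    rw [Complex.sq_norm, ← Complex.mul_conj]
    exact key
  constructor
  · intro hone
    have hc0 : ∀ y : Fin m → ZMod q, (∑ i, c i * y i) = 0 := by
      intro y
      have : ∀ i, c i = 0 := by
        intro i
        simp only [hc]
        rw [show vb i = 1 from hone i]
        ring
      simp [this]
    have hTval : T = (q:ℂ)^m := by
      rw [hT]
      simp only [hc0, chi_zero]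
      rw [Finset.sum_const, Finset.card_univ, Fintype.card_fun, ZMod.card, Fintype.card_fin]
      simp
    have hfin : ((‖WS q m f v‖^2 : ℝ) : ℂ) = (((q:ℝ)^(3*m) : ℝ) : ℂ) := by
      rw [habs, hTval]
      push_cast
      rw [← pow_mul, ← pow_add]
      congr 1
      ring
    exact_mod_cast hfin
  · intro hnone
    push_neg at hnone
    obtain ⟨j, hj⟩ := hnone
    have hcj : c j ≠ 0 := by
      simp only [hc]
      intro h
      exact hj (sub_eq_zero.mp h).symm
    have hshift : T = chi q (c j) * T := by
      set e : Fin m → ZMod q := Pi.single j 1 with he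
      rw [hT, Finset.mul_sum]
      refine Fintype.sum_equiv (Equiv.subRight e)
        (fun y => chi q (∑ i, c i * y i))
        (fun y => chi q (c j) * chi q (∑ i, c i * y i)) (fun y => ?_)
      simp only [Equiv.subRight_apply]
      have hs : (∑ i, c i * (y - e) i) = (∑ i, c i * y i) - c j := by
        simp only [Pi.sub_apply]
        rw [show (∑ i, c i * (y i - e i))
            = (∑ i, (c i * y i - c i * e i)) from
          Finset.sum_congr rfl fun i _ => by ring, Finset.sum_sub_distrib]
        congr 1
        simp [he, Pi.single_apply, mul_ite, Finset.sum_ite_eq']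
      rw [hs, ← chi_add]
      congr 1
      ring
    have hT0 : T = 0 := by
      by_contra h
      apply chi_ne_one q hcj
      have h1 : chi q (c j) * T = 1 * T := by rw [one_mul]; exact hshift.symm
      exact mul_right_cancel₀ h h1
    have hfin : ((‖WS q m f v‖^2 : ℝ) : ℂ) = ((0:ℝ) : ℂ) := by
      rw [habs, hT0, mul_zero]
      simp
    exact_mod_cast hfin

end
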